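/- Any ortholattice in which the 3OA law holds for all elements is orthomodular, i.e., if for all a₁, a₂, a₃ one has (a₁→a₃) ⊓ (a₁ ≡₃ a₂) ≤ (a₂→a₃), then for all a, b, a ≤ b implies a ⊔ (a' ⊓ b) = b. -/

import Mathlib

/-- An ortholattice: a bounded lattice with an orthocomplementation. -/
class Ortholattice (α : Type*) extends Lattice α, BoundedOrder α, Compl α where
  compl_compl : ∀ a : α, aᶜᶜ = a
  compl_le_compl : ∀ a b : α, a ≤ b → bᶜ ≤ aᶜ
  inf_compl_self : ∀ a : α, a ⊓ aᶜ = ⊥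
  sup_compl_self : ∀ a : α, a ⊔ aᶜ = ⊤

/-- The Sasaki hook `a → b := a' ⊔ (a ⊓ b)`. -/
def sasaki {α : Type*} [Ortholattice α] (a b : α) : α := aᶜ ⊔ (a ⊓ b)

section aux
variable {α : Type*} [Ortholattice α]

lemma ol_compl_top : (⊤ : α)ᶜ = ⊥ := by
  have := Ortholattice.inf_compl_self (⊤ : α); rwa [top_inf_eq] at this

lemma ol_compl_bot : (⊥ : α)ᶜ = ⊤ := by
  have := Ortholattice.sup_compl_self (⊥ : α); rwa [bot_sup_eq] at this

lemma ol_compl_inf (x y : α) : (x ⊓ y)ᶜ = xᶜ ⊔ yᶜ := by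
  apply le_antisymm
  · have h1 : (xᶜ ⊔ yᶜ)ᶜ ≤ x := by
      have := Ortholattice.compl_le_compl xᶜ (xᶜ ⊔ yᶜ) le_sup_left
      rwa [Ortholattice.compl_compl] at this
    have h2 : (xᶜ ⊔ yᶜ)ᶜ ≤ y := by
      have := Ortholattice.compl_le_compl yᶜ (xᶜ ⊔ yᶜ) le_sup_right
      rwa [Ortholattice.compl_compl] at this
    have := Ortholattice.compl_le_compl _ _ (le_inf h1 h2)
    rwa [Ortholattice.compl_compl] at this
  · exact sup_le (Ortholattice.compl_le_compl _ _ inf_le_left)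
      (Ortholattice.compl_le_compl _ _ inf_le_right)

lemma ol_compl_sup (x y : α) : (x ⊔ y)ᶜ = xᶜ ⊓ yᶜ := by
  have := ol_compl_inf xᶜ yᶜ
  rw [Ortholattice.compl_compl, Ortholattice.compl_compl] at this
  rw [← this, Ortholattice.compl_compl]

end aux

/-- If the 3OA law holds in an ortholattice, the lattice is orthomodular. -/
theorem stmt_1 {α : Type*} [Ortholattice α]
    (h3OA : ∀ a₁ a₂ a₃ : α,
      sasaki a₁ a₃ ⊓ ((sasaki a₁ a₃ ⊓ sasaki a₂ a₃) ⊔ (sasaki a₁ᶜ a₃ ⊓ sasaki a₂ᶜ a₃)) ≤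
        sasaki a₂ a₃) :
    ∀ a b : α, a ≤ b → a ⊔ (aᶜ ⊓ b) = b := by
  -- Key lemma: for x ≤ y, y ⊓ (yᶜ ⊔ x) ≤ x.
  have key : ∀ x y : α, x ≤ y → y ⊓ (yᶜ ⊔ x) ≤ x := by
    intro x y hxy
    have h := h3OA y ⊤ x
    have s1 : sasaki y x = yᶜ ⊔ x := by
      rw [sasaki, inf_eq_right.mpr hxy]
    have s2 : sasaki ⊤ x = x := by
      rw [sasaki, ol_compl_top, top_inf_eq, bot_sup_eq]
    have s3 : sasaki yᶜ x = y := by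
      have hb : yᶜ ⊓ x = ⊥ := by
        apply le_antisymm _ bot_le
        calc yᶜ ⊓ x ≤ yᶜ ⊓ y := inf_le_inf_left _ hxy
        _ = ⊥ := by rw [inf_comm, Ortholattice.inf_compl_self]
      rw [sasaki, Ortholattice.compl_compl, hb, sup_bot_eq]
    have s4 : sasaki (⊤ : α)ᶜ x = ⊤ := by
      rw [ol_compl_top, sasaki, ol_compl_bot, top_sup_eq]
    rw [s1, s2, s3, s4, inf_top_eq] at h
    have h2 : (yᶜ ⊔ x) ⊓ y ≤ x := by
      calc (yᶜ ⊔ x) ⊓ y ≤ (yᶜ ⊔ x) ⊓ (((yᶜ ⊔ x) ⊓ x) ⊔ y) := by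
            exact inf_le_inf_left _ le_sup_right
      _ ≤ x := h
    rwa [inf_comm] at h2
  intro a b hab
  apply le_antisymm
  · exact sup_le hab inf_le_right
  · have h1 : aᶜ ⊓ (a ⊔ bᶜ) ≤ bᶜ := by
      have := key bᶜ aᶜ (Ortholattice.compl_le_compl a b hab)
      rwa [Ortholattice.compl_compl] at this
    have h2 := Ortholattice.compl_le_compl _ _ h1
    rw [Ortholattice.compl_compl, ol_compl_inf, Ortholattice.compl_compl,
      ol_compl_sup, Ortholattice.compl_compl] at h2
    calc b ≤ a ⊔ (aᶜ ⊓ bᶜᶜ) := by rw [Ortholattice.compl_compl]; exact h2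
    _ = a ⊔ (aᶜ ⊓ b) := by rw [Ortholattice.compl_compl]
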